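/- If the torus T² is covered by three closed sets of diameter < √13/6, and some vertical line l_x meets only one covering set F_c, then a set of diameter ≥ √13/6 exists (contradiction). That is, no vertical line can be monochromatic. -/
import Mathlib

open scoped Real Pointwise

/-- The Euclidean (flat) distance on the torus `T² = ℝ²/ℤ²`. -/
noncomputable def torusDist (u v : AddCircle (1:ℝ) × AddCircle (1:ℝ)) : ℝ :=
  Real.sqrt (‖u.1 - v.1‖ ^ 2 + ‖u.2 - v.2‖ ^ 2)

/-- The diameter of a subset of the flat torus. -/
noncomputable def torusDiam (F : Set (AddCircle (1:ℝ) × AddCircle (1:ℝ))) : ℝ :=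
  sSup {d | ∃ u ∈ F, ∃ v ∈ F, d = torusDist u v}

/-- `d_m(T²)`: infimum of the maximal diameter over coverings of `T²` by `m` sets. -/
noncomputable def dTor (m : ℕ) : ℝ :=
  sInf {τ | ∃ F : Fin m → Set (AddCircle (1:ℝ) × AddCircle (1:ℝ)),
    (⋃ i, F i) = Set.univ ∧ ∀ i, torusDiam (F i) ≤ τ}

/-- The vertical line (circle) `l_x = {x} × T¹` on the flat torus. -/
def vline (x : ℝ) : Set (AddCircle (1:ℝ) × AddCircle (1:ℝ)) :=
  {p | p.1 = (x : AddCircle (1:ℝ))}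

local notation "T1" => AddCircle (1:ℝ)

lemma TNM.norm_coe_of_le (r : ℝ) (h : |r| ≤ 1/2) : ‖((r:ℝ) : T1)‖ = |r| := by
  rw [AddCircle.norm_coe_eq_abs_iff (1:ℝ) one_ne_zero]
  simpa using h

lemma TNM.norm_half : ‖(((1:ℝ)/2 : ℝ) : T1)‖ = 1/2 := by
  rw [TNM.norm_coe_of_le (1/2) (by rw [abs_of_nonneg] <;> norm_num), abs_of_nonneg] <;> norm_num

lemma TNM.coe_sub_one (r : ℝ) : ((r - 1 : ℝ) : T1) = ((r:ℝ) : T1) := by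
  have e := AddCircle.coe_add_period (1:ℝ) (r-1)
  rw [sub_add_cancel] at e
  exact e.symm

lemma TNM.norm_ge_third (r : ℝ) (h1 : 1/3 ≤ r) (h2 : r ≤ 2/3) : 1/3 ≤ ‖((r:ℝ) : T1)‖ := by
  rcases le_or_gt r (1/2) with h | h
  · rw [TNM.norm_coe_of_le r (by rw [abs_of_nonneg (by linarith)]; linarith)]
    rw [abs_of_nonneg (by linarith)]; exact h1
  · rw [← TNM.coe_sub_one r,
      TNM.norm_coe_of_le (r-1) (by rw [abs_of_nonpos (by linarith)]; linarith),
      abs_of_nonpos (by linarith)]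
    linarith

lemma TNM.norm_ge_third' (r : ℝ) (ha : 1/3 ≤ |r|) (hb : |r| ≤ 2/3) :
    1/3 ≤ ‖((r:ℝ) : T1)‖ := by
  rcases le_or_gt 0 r with h | h
  · rw [abs_of_nonneg h] at ha hb; exact TNM.norm_ge_third r ha hb
  · rw [abs_of_neg h] at ha hb
    have e : ((r:ℝ) : T1) = -(((-r : ℝ) : T1)) := by
      rw [← AddCircle.coe_neg]; norm_num
    rw [e, norm_neg]
    exact TNM.norm_ge_third (-r) ha hb

lemma TNM.dist_le_one (u v : T1 × T1) : torusDist u v ≤ 1 := by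
  have h1 : ‖u.1 - v.1‖ ≤ 1/2 := by
    simpa using AddCircle.norm_le_half_period (1:ℝ) (x := u.1 - v.1) one_ne_zero
  have h2 : ‖u.2 - v.2‖ ≤ 1/2 := by
    simpa using AddCircle.norm_le_half_period (1:ℝ) (x := u.2 - v.2) one_ne_zero
  have hn1 := norm_nonneg (u.1 - v.1)
  have hn2 := norm_nonneg (u.2 - v.2)
  unfold torusDist
  calc Real.sqrt (‖u.1 - v.1‖ ^ 2 + ‖u.2 - v.2‖ ^ 2) ≤ Real.sqrt 1 :=
        Real.sqrt_le_sqrt (by nlinarith)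
    _ = 1 := Real.sqrt_one

lemma TNM.pairF (G : Fin 3 → Set (T1 × T1))
    (hdiam : ∀ i, torusDiam (G i) < Real.sqrt 13 / 6)
    (i : Fin 3) (a b : ℝ) (y₁ y₂ : T1)
    (ha : ((a : T1), y₁) ∈ G i) (hb : ((b : T1), y₂) ∈ G i)
    (hn : 1/3 ≤ ‖((a - b : ℝ) : T1)‖) (hy : ‖y₁ - y₂‖ = 1/2) : False := by
  have hbdd : BddAbove {d | ∃ u ∈ G i, ∃ v ∈ G i, d = torusDist u v} := by
    refine ⟨1, ?_⟩
    rintro d ⟨u, _, v, _, rfl⟩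
    exact TNM.dist_le_one u v
  have hmem : torusDist ((a:T1), y₁) ((b:T1), y₂)
      ∈ {d | ∃ u ∈ G i, ∃ v ∈ G i, d = torusDist u v} := ⟨_, ha, _, hb, rfl⟩
  have hlt : torusDist ((a:T1), y₁) ((b:T1), y₂) < Real.sqrt 13 / 6 :=
    lt_of_le_of_lt (le_csSup hbdd hmem) (hdiam i)
  have dval : torusDist ((a:T1), y₁) ((b:T1), y₂)
      = Real.sqrt (‖((a - b : ℝ) : T1)‖ ^ 2 + (1/2) ^ 2) := by
    unfold torusDist
    rw [show ((a:T1), y₁).1 - ((b:T1), y₂).1 = ((a - b : ℝ) : T1) from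
        (by rw [AddCircle.coe_sub]),
      show ((a:T1), y₁).2 - ((b:T1), y₂).2 = y₁ - y₂ from rfl, hy]
  have heq : Real.sqrt 13 / 6 = Real.sqrt (13/36) := by
    rw [show (13:ℝ)/36 = 13 / 36 from rfl, Real.sqrt_div (by norm_num : (0:ℝ) ≤ 13),
      show (36:ℝ) = 6^2 by norm_num, Real.sqrt_sq (by norm_num : (0:ℝ) ≤ 6)]
  have hge : Real.sqrt (13/36) ≤ torusDist ((a:T1), y₁) ((b:T1), y₂) := by
    rw [dval]
    apply Real.sqrt_le_sqrt
    nlinarith [hn, norm_nonneg ((a - b : ℝ) : T1)]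
  rw [heq] at hlt
  linarith

lemma TNM.hy_sub (y : T1) : ‖y - (y + (((1:ℝ)/2 : ℝ) : T1))‖ = 1/2 := by
  rw [sub_add_eq_sub_sub, sub_self, zero_sub, norm_neg]
  exact TNM.norm_half

lemma TNM.hy_add (y : T1) : ‖(y + (((1:ℝ)/2 : ℝ) : T1)) - y‖ = 1/2 := by
  rw [add_sub_cancel_left]
  exact TNM.norm_half

lemma TNM.slice_extrema (G : Fin 3 → Set (T1 × T1)) (hclosed : ∀ i, IsClosed (G i))
    (x lo hi : ℝ) (i : Fin 3) (h : T1) (s0 : ℝ) (hs0 : s0 ∈ Set.Icc lo hi)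
    (hm : (((x + s0 : ℝ) : T1), h) ∈ G i) :
    ∃ mn mx, IsLeast {s : ℝ | s ∈ Set.Icc lo hi ∧ (((x + s : ℝ) : T1), h) ∈ G i} mn ∧
      IsGreatest {s : ℝ | s ∈ Set.Icc lo hi ∧ (((x + s : ℝ) : T1), h) ∈ G i} mx := by
  set S := {s : ℝ | s ∈ Set.Icc lo hi ∧ (((x + s : ℝ) : T1), h) ∈ G i} with hS
  have hcont : Continuous fun s : ℝ => ((((x + s : ℝ) : T1)), h) :=
    ((AddCircle.continuous_mk' (1:ℝ)).comp (continuous_const.add continuous_id)).prodMk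
      continuous_const
  have hSclosed : IsClosed S := isClosed_Icc.inter ((hclosed i).preimage hcont)
  have hScomp : IsCompact S :=
    isCompact_Icc.of_isClosed_subset hSclosed (fun s hs => hs.1)
  have hSne : S.Nonempty := ⟨s0, hs0, hm⟩
  obtain ⟨mn, hmn⟩ := hScomp.exists_isLeast hSne
  obtain ⟨mx, hmx⟩ := hScomp.exists_isGreatest hSne
  exact ⟨mn, mx, hmn, hmx⟩

lemma TNM.core2 (G : Fin 3 → Set (T1 × T1)) (hclosed : ∀ i, IsClosed (G i))
    (hcov : ∀ u : T1 × T1, ∃ i, u ∈ G i)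
    (hdiam : ∀ i, torusDiam (G i) < Real.sqrt 13 / 6)
    (x : ℝ) (i0 i1 i2 : Fin 3) (hall : ∀ i : Fin 3, i = i0 ∨ i = i1 ∨ i = i2)
    (h0 : ∀ y : T1, (((x : ℝ) : T1), y) ∈ G i0)
    (h1 : ∀ y : T1, (((x + 1/3 : ℝ) : T1), y) ∈ G i1) : False := by
  -- the line at 2/3 is monochromatic of color i2
  have h2 : ∀ y : T1, (((x + 2/3 : ℝ) : T1), y) ∈ G i2 := by
    intro y
    obtain ⟨i, hi⟩ := hcov (((x + 2/3 : ℝ) : T1), y)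
    rcases hall i with rfl | rfl | rfl
    · exact absurd hi (fun hi => TNM.pairF G hdiam i (x + 2/3) x y
        (y + (((1:ℝ)/2 : ℝ) : T1)) hi (h0 _)
        (by
          rw [show (x + 2/3) - x = (2:ℝ)/3 by ring]
          exact TNM.norm_ge_third (2/3) (by norm_num) (by norm_num))
        (TNM.hy_sub y))
    · exact absurd hi (fun hi => TNM.pairF G hdiam i (x + 2/3) (x + 1/3) y
        (y + (((1:ℝ)/2 : ℝ) : T1)) hi (h1 _)
        (by
          rw [show (x + 2/3) - (x + 1/3) = (1:ℝ)/3 by ring]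
          exact TNM.norm_ge_third (1/3) (by norm_num) (by norm_num))
        (TNM.hy_sub y))
    · exact hi
  set y0 : T1 := (((0:ℝ)) : T1) with hy0def
  set y1 : T1 := (((1:ℝ)/2 : ℝ) : T1) with hy1def
  have hy01 : ‖y0 - y1‖ = 1/2 := by
    rw [hy0def, hy1def]
    rw [show (((0:ℝ)) : T1) = 0 by norm_num, zero_sub, norm_neg]
    exact TNM.norm_half
  have hy10 : ‖y1 - y0‖ = 1/2 := by
    rw [hy0def, hy1def]
    rw [show (((0:ℝ)) : T1) = 0 by norm_num, sub_zero]
    exact TNM.norm_half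
  -- slices
  obtain ⟨cm0, cM0, hcm0, hcM0⟩ := TNM.slice_extrema G hclosed x (-(1/3)) (1/3) i0 y0 0
    (by constructor <;> norm_num) (by simpa using h0 y0)
  obtain ⟨cm1, cM1, hcm1, hcM1⟩ := TNM.slice_extrema G hclosed x (-(1/3)) (1/3) i0 y1 0
    (by constructor <;> norm_num) (by simpa using h0 y1)
  obtain ⟨am0, aM0, ham0, haM0⟩ := TNM.slice_extrema G hclosed x 0 (2/3) i1 y0 (1/3)
    (by constructor <;> norm_num) (h1 y0)
  obtain ⟨am1, aM1, ham1, haM1⟩ := TNM.slice_extrema G hclosed x 0 (2/3) i1 y1 (1/3)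
    (by constructor <;> norm_num) (h1 y1)
  obtain ⟨bm0, bM0, hbm0, hbM0⟩ := TNM.slice_extrema G hclosed x (1/3) 1 i2 y0 (2/3)
    (by constructor <;> norm_num) (h2 y0)
  obtain ⟨bm1, bM1, hbm1, hbM1⟩ := TNM.slice_extrema G hclosed x (1/3) 1 i2 y1 (2/3)
    (by constructor <;> norm_num) (h2 y1)
  -- cross inequalities
  have cross : ∀ (i : Fin 3) (lo hi : ℝ), hi - lo = 2/3 → ∀ (h h' : T1), ‖h - h'‖ = 1/2 →
      ∀ M m, M ∈ Set.Icc lo hi → m ∈ Set.Icc lo hi →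
      (((x + M : ℝ) : T1), h) ∈ G i → (((x + m : ℝ) : T1), h') ∈ G i → M < m + 1/3 := by
    intro i lo hi hw h h' hh M m hM hm hMg hmg
    by_contra hcon
    push_neg at hcon
    refine TNM.pairF G hdiam i (x + M) (x + m) h h' hMg hmg ?_ hh
    rw [show (x + M) - (x + m) = M - m by ring]
    refine TNM.norm_ge_third' _ ?_ ?_ <;> rw [abs_of_nonneg (by linarith [hM.1, hm.2])] <;>
      [linarith; linarith [hM.2, hm.1]]
  -- coverage inequalities at a given height
  have covCA : ∀ (h h' : T1), ‖h - h'‖ = 1/2 →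
      ∀ am cM, IsLeast {s : ℝ | s ∈ Set.Icc (0:ℝ) (2/3) ∧ (((x + s : ℝ) : T1), h) ∈ G i1} am →
      IsGreatest {s : ℝ | s ∈ Set.Icc (-(1/3):ℝ) (1/3) ∧ (((x + s : ℝ) : T1), h) ∈ G i0} cM →
      am ≤ cM := by
    intro h h' hh am cM hA hC
    by_contra hlt
    push_neg at hlt
    have hcM_lb : (0:ℝ) ≤ cM := hC.2 ⟨by constructor <;> norm_num, by simpa using h0 h⟩
    have ham_ub : am ≤ 1/3 := hA.2 ⟨by constructor <;> norm_num, h1 h⟩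
    set s := (cM + am)/2 with hsdef
    have hs1 : 0 < s := by simp only [hsdef]; linarith
    have hs2 : s < 1/3 := by simp only [hsdef]; linarith
    obtain ⟨i, hi⟩ := hcov (((x + s : ℝ) : T1), h)
    rcases hall i with rfl | rfl | rfl
    · have := hC.2 ⟨⟨by linarith, by linarith⟩, hi⟩
      simp only [hsdef] at this; linarith
    · have := hA.1.1  -- dummy
      have h' := hA.2 ⟨⟨by linarith, by linarith⟩, hi⟩
      simp only [hsdef] at h'; linarith
    · refine TNM.pairF G hdiam i (x + s) (x + 2/3) h h' hi (h2 h') ?_ hh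
      rw [show (x + s) - (x + 2/3) = s - 2/3 by ring]
      refine TNM.norm_ge_third' _ ?_ ?_ <;> rw [abs_of_nonpos (by linarith)] <;> linarith
  have covAB : ∀ (h h' : T1), ‖h - h'‖ = 1/2 →
      ∀ bm aM, IsLeast {s : ℝ | s ∈ Set.Icc ((1:ℝ)/3) 1 ∧ (((x + s : ℝ) : T1), h) ∈ G i2} bm →
      IsGreatest {s : ℝ | s ∈ Set.Icc (0:ℝ) (2/3) ∧ (((x + s : ℝ) : T1), h) ∈ G i1} aM →
      bm ≤ aM := by
    intro h h' hh bm aM hB hA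
    by_contra hlt
    push_neg at hlt
    have haM_lb : (1:ℝ)/3 ≤ aM := hA.2 ⟨by constructor <;> norm_num, h1 h⟩
    have hbm_ub : bm ≤ 2/3 := hB.2 ⟨by constructor <;> norm_num, h2 h⟩
    set s := (aM + bm)/2 with hsdef
    have hs1 : 1/3 < s := by simp only [hsdef]; linarith
    have hs2 : s < 2/3 := by simp only [hsdef]; linarith
    obtain ⟨i, hi⟩ := hcov (((x + s : ℝ) : T1), h)
    rcases hall i with rfl | rfl | rfl
    · refine TNM.pairF G hdiam i (x + s) x h h' hi (h0 h') ?_ hh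
      rw [show (x + s) - x = s by ring]
      refine TNM.norm_ge_third' _ ?_ ?_ <;> rw [abs_of_nonneg (by linarith)] <;> linarith
    · have h'' := hA.2 ⟨⟨by linarith, by linarith⟩, hi⟩
      simp only [hsdef] at h''; linarith
    · have h'' := hB.2 ⟨⟨by linarith, by linarith⟩, hi⟩
      simp only [hsdef] at h''; linarith
  have covBC : ∀ (h h' : T1), ‖h - h'‖ = 1/2 →
      ∀ cm bM, IsLeast {s : ℝ | s ∈ Set.Icc (-(1/3):ℝ) (1/3) ∧ (((x + s : ℝ) : T1), h) ∈ G i0} cm →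
      IsGreatest {s : ℝ | s ∈ Set.Icc ((1:ℝ)/3) 1 ∧ (((x + s : ℝ) : T1), h) ∈ G i2} bM →
      cm + 1 ≤ bM := by
    intro h h' hh cm bM hC hB
    by_contra hlt
    push_neg at hlt
    have hcm_ub : cm ≤ 0 := hC.2 ⟨by constructor <;> norm_num, by simpa using h0 h⟩
    have hbM_lb : (2:ℝ)/3 ≤ bM := hB.2 ⟨by constructor <;> norm_num, h2 h⟩
    set s := (bM + cm + 1)/2 with hsdef
    have hs1 : 2/3 < s := by simp only [hsdef]; linarith
    have hs2 : s < 1 := by simp only [hsdef]; linarith [hC.1.1.2]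
    obtain ⟨i, hi⟩ := hcov (((x + s : ℝ) : T1), h)
    rcases hall i with rfl | rfl | rfl
    · have hmem : s - 1 ∈ {t : ℝ | t ∈ Set.Icc (-(1/3):ℝ) (1/3) ∧ (((x + t : ℝ) : T1), h) ∈ G i} := by
        refine ⟨⟨by linarith, by linarith⟩, ?_⟩
        have e : ((x + (s-1) : ℝ) : T1) = ((x + s : ℝ) : T1) := by
          rw [show x + (s-1) = (x + s) - 1 by ring]
          exact TNM.coe_sub_one (x + s)
        rw [e]; exact hi
      have := hC.2 hmem
      simp only [hsdef] at this; linarith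
    · refine TNM.pairF G hdiam i (x + s) (x + 1/3) h h' hi (h1 h') ?_ hh
      rw [show (x + s) - (x + 1/3) = s - 1/3 by ring]
      refine TNM.norm_ge_third' _ ?_ ?_ <;> rw [abs_of_nonneg (by linarith)] <;> linarith
    · have h'' := hB.2 ⟨⟨by linarith, by linarith⟩, hi⟩
      simp only [hsdef] at h''; linarith
  -- assemble
  have e1 := covCA y0 y1 hy01 am0 cM0 ham0 hcM0
  have e2 := covCA y1 y0 hy10 am1 cM1 ham1 hcM1
  have e3 := covAB y0 y1 hy01 bm0 aM0 hbm0 haM0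
  have e4 := covAB y1 y0 hy10 bm1 aM1 hbm1 haM1
  have e5 := covBC y0 y1 hy01 cm0 bM0 hcm0 hbM0
  have e6 := covBC y1 y0 hy10 cm1 bM1 hcm1 hbM1
  have x1 := cross i0 (-(1/3)) (1/3) (by norm_num) y0 y1 hy01 cM0 cm1 hcM0.1.1 hcm1.1.1
    hcM0.1.2 hcm1.1.2
  have x2 := cross i0 (-(1/3)) (1/3) (by norm_num) y1 y0 hy10 cM1 cm0 hcM1.1.1 hcm0.1.1
    hcM1.1.2 hcm0.1.2
  have x3 := cross i1 0 (2/3) (by norm_num) y0 y1 hy01 aM0 am1 haM0.1.1 ham1.1.1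
    haM0.1.2 ham1.1.2
  have x4 := cross i1 0 (2/3) (by norm_num) y1 y0 hy10 aM1 am0 haM1.1.1 ham0.1.1
    haM1.1.2 ham0.1.2
  have x5 := cross i2 (1/3) 1 (by norm_num) y0 y1 hy01 bM0 bm1 hbM0.1.1 hbm1.1.1
    hbM0.1.2 hbm1.1.2
  have x6 := cross i2 (1/3) 1 (by norm_num) y1 y0 hy10 bM1 bm0 hbM1.1.1 hbm0.1.1
    hbM1.1.2 hbm0.1.2
  linarith

lemma TNM.core (G : Fin 3 → Set (T1 × T1)) (hclosed : ∀ i, IsClosed (G i))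
    (hcov : ∀ u : T1 × T1, ∃ i, u ∈ G i)
    (hdiam : ∀ i, torusDiam (G i) < Real.sqrt 13 / 6)
    (x : ℝ) (i0 i1 i2 : Fin 3) (hall : ∀ i : Fin 3, i = i0 ∨ i = i1 ∨ i = i2)
    (h0 : ∀ y : T1, (((x : ℝ) : T1), y) ∈ G i0) : False := by
  have hall' : ∀ i : Fin 3, i = i0 ∨ i = i2 ∨ i = i1 := by
    intro i; rcases hall i with h | h | h <;> tauto
  have hl13 : ∀ y : T1, (((x + 1/3 : ℝ) : T1), y) ∈ G i1 ∨ (((x + 1/3 : ℝ) : T1), y) ∈ G i2 := by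
    intro y
    obtain ⟨i, hi⟩ := hcov (((x + 1/3 : ℝ) : T1), y)
    rcases hall i with rfl | rfl | rfl
    · exact absurd hi (fun hi => TNM.pairF G hdiam i (x + 1/3) x y
        (y + (((1:ℝ)/2 : ℝ) : T1)) hi (h0 _)
        (by
          rw [show (x + 1/3) - x = (1:ℝ)/3 by ring]
          exact TNM.norm_ge_third (1/3) (by norm_num) (by norm_num))
        (TNM.hy_sub y))
    · exact Or.inl hi
    · exact Or.inr hi
  by_cases hbi : ∃ y : T1, (((x + 1/3 : ℝ) : T1), y) ∈ G i1 ∧ (((x + 1/3 : ℝ) : T1), y) ∈ G i2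
  · obtain ⟨y₀, hy1, hy2⟩ := hbi
    obtain ⟨i, hi⟩ := hcov (((x + 2/3 : ℝ) : T1), y₀ + (((1:ℝ)/2 : ℝ) : T1))
    rcases hall i with rfl | rfl | rfl
    · exact TNM.pairF G hdiam i (x + 2/3) x (y₀ + (((1:ℝ)/2 : ℝ) : T1)) y₀ hi (h0 y₀)
        (by
          rw [show (x + 2/3) - x = (2:ℝ)/3 by ring]
          exact TNM.norm_ge_third (2/3) (by norm_num) (by norm_num))
        (TNM.hy_add y₀)
    · exact TNM.pairF G hdiam i (x + 2/3) (x + 1/3) (y₀ + (((1:ℝ)/2 : ℝ) : T1)) y₀ hi hy1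
        (by
          rw [show (x + 2/3) - (x + 1/3) = (1:ℝ)/3 by ring]
          exact TNM.norm_ge_third (1/3) (by norm_num) (by norm_num))
        (TNM.hy_add y₀)
    · exact TNM.pairF G hdiam i (x + 2/3) (x + 1/3) (y₀ + (((1:ℝ)/2 : ℝ) : T1)) y₀ hi hy2
        (by
          rw [show (x + 2/3) - (x + 1/3) = (1:ℝ)/3 by ring]
          exact TNM.norm_ge_third (1/3) (by norm_num) (by norm_num))
        (TNM.hy_add y₀)
  · push_neg at hbi
    set S1 : Set T1 := {y | (((x + 1/3 : ℝ) : T1), y) ∈ G i1} with hS1def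
    set S2 : Set T1 := {y | (((x + 1/3 : ℝ) : T1), y) ∈ G i2} with hS2def
    have hS1closed : IsClosed S1 :=
      (hclosed i1).preimage (continuous_const.prodMk continuous_id)
    have hS2closed : IsClosed S2 :=
      (hclosed i2).preimage (continuous_const.prodMk continuous_id)
    have hS1eq : S1 = S2ᶜ := by
      ext y
      constructor
      · intro h hy2
        exact hbi y h hy2
      · intro h
        rcases hl13 y with h1 | h2
        · exact h1
        · exact absurd h2 h
    have hclopen : IsClopen S1 := ⟨hS1closed, by rw [hS1eq]; exact hS2closed.isOpen_compl⟩
    rcases isClopen_iff.mp hclopen with hempty | huniv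
    · refine TNM.core2 G hclosed hcov hdiam x i0 i2 i1 hall' h0 ?_
      intro y
      rcases hl13 y with h1 | h2
      · exact absurd (show y ∈ S1 from h1) (by rw [hempty]; exact Set.notMem_empty y)
      · exact h2
    · refine TNM.core2 G hclosed hcov hdiam x i0 i1 i2 hall h0 ?_
      intro y
      have : y ∈ S1 := by rw [huniv]; trivial
      exact this

theorem torus_no_monochromatic_line (F : Fin 3 → Set (AddCircle (1:ℝ) × AddCircle (1:ℝ)))
    (hclosed : ∀ i, IsClosed (F i))
    (hcover : (⋃ i, F i) = Set.univ)
    (hdiam : ∀ i, torusDiam (F i) < Real.sqrt 13 / 6)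
    (c : Fin 3) (x : ℝ)
    (hmono : ∀ i, i ≠ c → vline x ∩ F i = ∅) :
    False := by
  have hcov : ∀ u : T1 × T1, ∃ i, u ∈ F i := by
    intro u
    have : u ∈ ⋃ i, F i := by rw [hcover]; trivial
    simpa [Set.mem_iUnion] using this
  have hline : ∀ y : T1, (((x : ℝ) : T1), y) ∈ F c := by
    intro y
    obtain ⟨i, hi⟩ := hcov (((x : ℝ) : T1), y)
    by_cases h : i = c
    · exact h ▸ hi
    · have hmem : (((x : ℝ) : T1), y) ∈ vline x ∩ F i := ⟨rfl, hi⟩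
      rw [hmono i h] at hmem
      exact hmem.elim
  fin_cases c
  · exact TNM.core F hclosed hcov hdiam x 0 1 2 (by decide) hline
  · exact TNM.core F hclosed hcov hdiam x 1 0 2 (by decide) hline
  · exact TNM.core F hclosed hcov hdiam x 2 0 1 (by decide) hline
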